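/- If a blocked chain of domino tiles has total pip sum equal to 42, then both of its ends equal 0, it consists of exactly 10 tiles, it contains all seven domino tiles containing 0, and its three remaining tiles contain no 0 and their six entries are pairwise distinct (hence they are exactly the values 1,2,3,4,5,6). -/

import Mathlib

/-- A domino tile is an unordered pair of values in `{0,…,6}`. -/
abbrev Tile := Sym2 (Fin 7)

/-- The pip sum of the tile `[a,b]` is `a + b`. -/
def pips (t : Tile) : ℕ :=
  Sym2.lift ⟨fun (a b : Fin 7) => (a : ℕ) + (b : ℕ), fun a b => Nat.add_comm a b⟩ t

/-- A chain of domino tiles: a nonempty finite sequence of oriented tiles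
`(a₁,b₁),…,(aₙ,bₙ)` whose underlying unordered tiles are pairwise distinct and
which satisfies `bᵢ = aᵢ₊₁` for all `1 ≤ i < n`. -/
structure DChain where
  tiles : List (Fin 7 × Fin 7)
  ne : tiles ≠ []
  nodup : (tiles.map fun p => Sym2.mk p.1 p.2).Nodup
  linked : tiles.Chain' fun p q => p.2 = q.1

/-- The left end `a₁` of a chain. -/
def DChain.left (C : DChain) : Fin 7 := (C.tiles.head C.ne).1

/-- The right end `bₙ` of a chain. -/
def DChain.right (C : DChain) : Fin 7 := (C.tiles.getLast C.ne).2

/-- The `2n` entries `a₁,b₁,a₂,b₂,…,aₙ,bₙ` of a chain. -/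
def DChain.entries (C : DChain) : List (Fin 7) := C.tiles.flatMap fun p => [p.1, p.2]

/-- The underlying (unordered) tiles of a chain. -/
def DChain.tileList (C : DChain) : List Tile := C.tiles.map fun p => Sym2.mk p.1 p.2

/-- The total pip sum of a chain. -/
def DChain.pipsSum (C : DChain) : ℕ := (C.tiles.map fun p => (p.1 : ℕ) + (p.2 : ℕ)).sum

/-- A chain is blocked if no domino tile outside the chain contains its left end,
and no domino tile outside the chain contains its right end. -/
def DChain.Blocked (C : DChain) : Prop :=
  ∀ t : Tile, t ∉ C.tileList → C.left ∉ t ∧ C.right ∉ t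

/-- If a blocked chain has total pip sum 42, then both of its ends equal 0, it consists
of exactly 10 tiles, it contains all seven domino tiles containing 0, and its three
remaining tiles contain no 0 and their six entries are pairwise distinct — hence these
entries are exactly the values 1,2,3,4,5,6. -/
/- ### auxiliary machinery -/

def F (k : Fin 7) : Tile → ℕ :=
  Sym2.lift ⟨fun a b => (if a = k then 1 else 0) + (if b = k then 1 else 0), fun a b => by dsimp; omega⟩

lemma count_pair (a b k : Fin 7) :
    ([a, b] : List (Fin 7)).count k = (if a = k then 1 else 0) + (if b = k then 1 else 0) := by
  by_cases h1 : a = k <;> by_cases h2 : b = k <;> simp [List.count_cons, h1, h2]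

lemma count_flatMap (l : List (Fin 7 × Fin 7)) (k : Fin 7) :
    (l.flatMap fun p => [p.1, p.2]).count k = ((l.map fun p => Sym2.mk p.1 p.2).map (F k)).sum := by
  induction l with
  | nil => simp
  | cons p l ih =>
    simp only [List.flatMap_cons, List.count_append, List.map_cons, List.sum_cons, ih]
    have : F k (Sym2.mk p.1 p.2) = (if p.1 = k then 1 else 0) + (if p.2 = k then 1 else 0) := rfl
    rw [this, count_pair]

lemma sum_flatMap (l : List (Fin 7 × Fin 7)) :
    (l.map fun p => (p.1 : ℕ) + (p.2 : ℕ)).sum = ((l.map fun p => Sym2.mk p.1 p.2).map pips).sum := by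
  induction l with
  | nil => simp
  | cons p l ih => simp [ih]; rfl

lemma parity_lemma : ∀ (l : List (Fin 7 × Fin 7)) (hne : l ≠ [])
    (_ : l.Chain' fun p q => p.2 = q.1) (k : Fin 7),
    (l.flatMap fun p => [p.1, p.2]).count k % 2 =
      ((if (l.head hne).1 = k then 1 else 0) + (if (l.getLast hne).2 = k then 1 else 0)) % 2 := by
  intro l
  induction l with
  | nil => intro h; exact absurd rfl h
  | cons p l ih =>
    intro hne hl k
    match l, ih with
    | [], _ =>
      simp only [List.flatMap_cons, List.flatMap_nil, List.append_nil, List.head_cons,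
        List.getLast_singleton, count_pair]
      rfl
    | q :: l', ih =>
      have hpq : p.2 = q.1 := (List.isChain_cons_cons.mp hl).1
      have htail := ih (by simp) (List.isChain_cons_cons.mp hl).2 k
      rw [List.head_cons] at htail ⊢
      simp only [List.flatMap_cons, List.count_append, List.head_cons] at htail
      simp only [List.flatMap_cons, List.count_append, List.head_cons]
      rw [List.getLast_cons (by simp)]
      rw [count_pair, hpq]
      omega

lemma sumA_self : ∀ x : Fin 7, ∑ t ∈ Finset.univ.filter (fun t : Tile => x ∈ t), F x t = 8 := by
  decide
lemma sumA_other : ∀ x k : Fin 7, k ≠ x →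
    ∑ t ∈ Finset.univ.filter (fun t : Tile => x ∈ t), F k t = 1 := by decide
lemma sumA_pips : ∀ x : Fin 7,
    ∑ t ∈ Finset.univ.filter (fun t : Tile => x ∈ t), pips t = 21 + 7 * x.val := by decide
lemma cardA : ∀ x : Fin 7, (Finset.univ.filter (fun t : Tile => x ∈ t)).card = 7 := by decide
lemma pips_eq : ∀ t : Tile, pips t = ∑ k : Fin 7, k.val * F k t := by decide
lemma F_total : ∀ t : Tile, ∑ k : Fin 7, F k t = 2 := by decide
lemma F_zero : ∀ (t : Tile) (x : Fin 7), x ∉ t → F x t = 0 := by decide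
lemma fin7_cases : ∀ k : Fin 7, k = 0 ∨ k = 1 ∨ k = 2 ∨ k = 3 ∨ k = 4 ∨ k = 5 ∨ k = 6 := by
  decide

theorem blocked_pipsSum_42_structure (C : DChain) (h : C.Blocked)
    (h42 : C.pipsSum = 42) :
    C.left = 0 ∧ C.right = 0 ∧ C.tiles.length = 10 ∧
    (∀ t : Tile, (0 : Fin 7) ∈ t → t ∈ C.tileList) ∧
    ((C.tiles.filter fun p => p.1 != 0 && p.2 != 0).length = 3 ∧
      ((C.tiles.filter fun p => p.1 != 0 && p.2 != 0).flatMap fun p => [p.1, p.2]).Nodup ∧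
      ((C.tiles.filter fun p => p.1 != 0 && p.2 != 0).flatMap
          fun p => [p.1, p.2]).toFinset = ({1, 2, 3, 4, 5, 6} : Finset (Fin 7))) := by
  have hnd : C.tileList.Nodup := C.nodup
  have hxT : ∀ t : Tile, C.left ∈ t → t ∈ C.tileList.toFinset := by
    intro t ht
    by_contra hc
    exact (h t (fun hm => hc (List.mem_toFinset.mpr hm))).1 ht
  have hTA : C.tileList.toFinset.filter (fun t => C.left ∈ t)
      = Finset.univ.filter (fun t : Tile => C.left ∈ t) := by
    ext t
    simp only [Finset.mem_filter, Finset.mem_univ, true_and]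
    exact ⟨fun h' => h'.2, fun h' => ⟨hxT t h', h'⟩⟩
  have hsplit : ∀ f : Tile → ℕ, ∑ t ∈ C.tileList.toFinset, f t
      = ∑ t ∈ Finset.univ.filter (fun t : Tile => C.left ∈ t), f t
        + ∑ t ∈ C.tileList.toFinset.filter (fun t => C.left ∉ t), f t := by
    intro f
    rw [← Finset.sum_filter_add_sum_filter_not C.tileList.toFinset (fun t => C.left ∈ t) f, hTA]
  have hcount : ∀ k, C.entries.count k
      = ∑ t ∈ Finset.univ.filter (fun t : Tile => C.left ∈ t), F k t
        + ∑ t ∈ C.tileList.toFinset.filter (fun t => C.left ∉ t), F k t := by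
    intro k
    have h1 : (C.tileList.map (F k)).sum = ∑ t ∈ C.tileList.toFinset, F k t :=
      (List.sum_toFinset (F k) hnd).symm
    rw [DChain.entries, count_flatMap,
      show ((C.tiles.map fun p => Sym2.mk p.1 p.2).map (F k)) = C.tileList.map (F k) from rfl,
      h1, hsplit]
  have hdx : (∑ t ∈ C.tileList.toFinset.filter (fun t => C.left ∉ t), F C.left t) = 0 :=
    Finset.sum_eq_zero fun t ht => F_zero t _ (Finset.mem_filter.mp ht).2
  have hcx : C.entries.count C.left = 8 := by
    rw [hcount, hdx, sumA_self]
  have hpar : ∀ k : Fin 7, C.entries.count k % 2 =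
      ((if C.left = k then 1 else 0) + (if C.right = k then 1 else 0)) % 2 :=
    fun k => parity_lemma C.tiles C.ne C.linked k
  have hright : C.right = C.left := by
    by_contra hq
    have hp := hpar C.left
    rw [hcx, if_pos rfl, if_neg hq] at hp
    omega
  have hodd : ∀ k : Fin 7, k ≠ C.left →
      (∑ t ∈ C.tileList.toFinset.filter (fun t => C.left ∉ t), F k t) % 2 = 1 := by
    intro k hk
    have hp := hpar k
    rw [hcount, sumA_other C.left k hk, if_neg (fun hh => hk hh.symm), hright,
      if_neg (fun hh => hk hh.symm)] at hp
    omega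
  have hpos : ∀ k : Fin 7, k ≠ C.left →
      1 ≤ ∑ t ∈ C.tileList.toFinset.filter (fun t => C.left ∉ t), F k t := by
    intro k hk
    have := hodd k hk
    omega
  have hpips : 42 = (21 + 7 * (C.left : ℕ))
      + ∑ t ∈ C.tileList.toFinset.filter (fun t => C.left ∉ t), pips t := by
    calc 42 = (C.tiles.map fun p => (p.1 : ℕ) + (p.2 : ℕ)).sum := h42.symm
    _ = (C.tileList.map pips).sum := sum_flatMap C.tiles
    _ = ∑ t ∈ C.tileList.toFinset, pips t := (List.sum_toFinset pips hnd).symm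
    _ = _ := by rw [hsplit pips, sumA_pips]
  have hPB : ∑ t ∈ C.tileList.toFinset.filter (fun t => C.left ∉ t), pips t
      = ∑ k : Fin 7, (k : ℕ) *
          (∑ t ∈ C.tileList.toFinset.filter (fun t => C.left ∉ t), F k t) := by
    rw [Finset.sum_congr rfl (fun t _ => pips_eq t), Finset.sum_comm]
    simp only [← Finset.mul_sum]
  have hsum21 : (C.left : ℕ) + ∑ k ∈ Finset.univ.erase C.left, (k : ℕ) = 21 := by
    rw [Finset.add_sum_erase _ _ (Finset.mem_univ C.left)]
    decide
  have hge : ∑ k ∈ Finset.univ.erase C.left, (k : ℕ)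
      ≤ ∑ k : Fin 7, (k : ℕ) *
          (∑ t ∈ C.tileList.toFinset.filter (fun t => C.left ∉ t), F k t) := by
    calc ∑ k ∈ Finset.univ.erase C.left, (k : ℕ)
        ≤ ∑ k ∈ Finset.univ.erase C.left, (k : ℕ) *
            (∑ t ∈ C.tileList.toFinset.filter (fun t => C.left ∉ t), F k t) :=
          Finset.sum_le_sum (fun k hk =>
            Nat.le_mul_of_pos_right _ (hpos k (Finset.mem_erase.mp hk).1))
    _ ≤ _ := Finset.sum_le_sum_of_subset (Finset.erase_subset _ _)
  have hx0 : C.left = 0 := by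
    rw [hPB] at hpips
    have hv : (C.left : ℕ) ≤ 6 := Nat.lt_succ_iff.mp C.left.isLt
    apply Fin.ext
    show (C.left : ℕ) = 0
    omega
  rw [hx0] at hxT hTA hdx hodd hpos hpips hPB
  -- values of d
  have hP21 : ∑ k : Fin 7, (k : ℕ) *
      (∑ t ∈ C.tileList.toFinset.filter (fun t => (0 : Fin 7) ∉ t), F k t) = 21 := by
    rw [hPB] at hpips
    simp only [Fin.val_zero] at hpips
    omega
  have h1 := hpos 1 (by decide)
  have h2 := hpos 2 (by decide)
  have h3 := hpos 3 (by decide)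
  have h4 := hpos 4 (by decide)
  have h5 := hpos 5 (by decide)
  have h6 := hpos 6 (by decide)
  rw [Fin.sum_univ_seven] at hP21
  have c0 : ((0 : Fin 7) : ℕ) = 0 := rfl
  have c1 : ((1 : Fin 7) : ℕ) = 1 := rfl
  have c2 : ((2 : Fin 7) : ℕ) = 2 := rfl
  have c3 : ((3 : Fin 7) : ℕ) = 3 := rfl
  have c4 : ((4 : Fin 7) : ℕ) = 4 := rfl
  have c5 : ((5 : Fin 7) : ℕ) = 5 := rfl
  have c6 : ((6 : Fin 7) : ℕ) = 6 := rfl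
  rw [c0, c1, c2, c3, c4, c5, c6] at hP21
  have e1 : (∑ t ∈ C.tileList.toFinset.filter (fun t => (0 : Fin 7) ∉ t), F 1 t) = 1 := by omega
  have e2 : (∑ t ∈ C.tileList.toFinset.filter (fun t => (0 : Fin 7) ∉ t), F 2 t) = 1 := by omega
  have e3 : (∑ t ∈ C.tileList.toFinset.filter (fun t => (0 : Fin 7) ∉ t), F 3 t) = 1 := by omega
  have e4 : (∑ t ∈ C.tileList.toFinset.filter (fun t => (0 : Fin 7) ∉ t), F 4 t) = 1 := by omega
  have e5 : (∑ t ∈ C.tileList.toFinset.filter (fun t => (0 : Fin 7) ∉ t), F 5 t) = 1 := by omega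
  have e6 : (∑ t ∈ C.tileList.toFinset.filter (fun t => (0 : Fin 7) ∉ t), F 6 t) = 1 := by omega
  have hdBle : ∀ k : Fin 7,
      (∑ t ∈ C.tileList.toFinset.filter (fun t => (0 : Fin 7) ∉ t), F k t) ≤ 1 := by
    intro k
    rcases fin7_cases k with rfl | rfl | rfl | rfl | rfl | rfl | rfl <;> omega
  -- card of B
  have hB3 : (C.tileList.toFinset.filter (fun t => (0 : Fin 7) ∉ t)).card = 3 := by
    have h2' : ∑ t ∈ C.tileList.toFinset.filter (fun t => (0 : Fin 7) ∉ t), (2 : ℕ)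
        = ∑ t ∈ C.tileList.toFinset.filter (fun t => (0 : Fin 7) ∉ t), ∑ k : Fin 7, F k t :=
      Finset.sum_congr rfl (fun t _ => (F_total t).symm)
    rw [Finset.sum_comm, Fin.sum_univ_seven] at h2'
    rw [Finset.sum_const, smul_eq_mul] at h2'
    omega
  -- length of tiles
  have hlen : C.tiles.length = 10 := by
    have hc' := Finset.card_filter_add_card_filter_not
      (s := C.tileList.toFinset) (fun t : Tile => (0 : Fin 7) ∈ t)
    rw [hTA, cardA] at hc'
    have hcard : C.tileList.toFinset.card = C.tiles.length := by
      rw [List.toFinset_card_of_nodup hnd, DChain.tileList, List.length_map]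
    omega
  -- list-level facts
  have hBlnd : ((C.tiles.filter fun p => p.1 != 0 && p.2 != 0).map fun p => Sym2.mk p.1 p.2).Nodup :=
    C.nodup.sublist (List.filter_sublist.map _)
  have hBlF : ((C.tiles.filter fun p => p.1 != 0 && p.2 != 0).map fun p => Sym2.mk p.1 p.2).toFinset
      = C.tileList.toFinset.filter (fun t => (0 : Fin 7) ∉ t) := by
    ext t
    simp only [List.mem_toFinset, List.mem_map, List.mem_filter, Finset.mem_filter,
      DChain.tileList, Bool.and_eq_true, bne_iff_ne, ne_eq]
    constructor
    · rintro ⟨⟨a, b⟩, ⟨hp, ha, hb⟩, rfl⟩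
      refine ⟨⟨⟨a, b⟩, hp, rfl⟩, ?_⟩
      rw [Sym2.mem_iff]
      rintro (rfl | rfl)
      · exact ha rfl
      · exact hb rfl
    · rintro ⟨⟨⟨a, b⟩, hp, rfl⟩, h0⟩
      rw [Sym2.mem_iff] at h0
      push_neg at h0
      exact ⟨⟨a, b⟩, ⟨hp, fun ha => h0.1 ha.symm, fun hb => h0.2 hb.symm⟩, rfl⟩
  have hBl3 : (C.tiles.filter fun p => p.1 != 0 && p.2 != 0).length = 3 := by
    have hcard := List.toFinset_card_of_nodup hBlnd
    rw [hBlF, hB3, List.length_map] at hcard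
    omega
  have hBlcount : ∀ k : Fin 7,
      ((C.tiles.filter fun p => p.1 != 0 && p.2 != 0).flatMap fun p => [p.1, p.2]).count k
        = ∑ t ∈ C.tileList.toFinset.filter (fun t => (0 : Fin 7) ∉ t), F k t := by
    intro k
    rw [count_flatMap, ← List.sum_toFinset (F k) hBlnd, hBlF]
  refine ⟨hx0, hright.trans hx0, hlen, fun t ht => List.mem_toFinset.mp (hxT t ht), hBl3, ?_, ?_⟩
  · rw [List.nodup_iff_count_le_one]
    intro k
    rw [hBlcount]
    exact hdBle k
  · ext k
    rw [List.mem_toFinset, ← List.count_pos_iff, hBlcount]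
    rcases fin7_cases k with rfl | rfl | rfl | rfl | rfl | rfl | rfl
    · rw [hdx]; decide
    · rw [e1]; decide
    · rw [e2]; decide
    · rw [e3]; decide
    · rw [e4]; decide
    · rw [e5]; decide
    · rw [e6]; decide
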